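/- Let G = (V,E) be a graph on n vertices with maximum degree 2 ≤ Δ, let T ≥ 2, and let ENV : V × [T] → {0,1}. A pair (v,t) with 2 ≤ t ≤ T is violating if either ENV(v,t)=0 and some neighbor u of v has ENV(u,t−1)=1, or ENV(v,t)=1 and all neighbors u of v have ENV(u,t−1)=0. Let viol(ENV) be the number of violating pairs and dist(ENV, 1-BP) the minimum normalized Hamming distance (1/(nT))·#{(v,t) : ENV(v,t) ≠ ENV'(v,t)} over environments ENV' with no violating pairs. Then viol(ENV)/((Δ+1)·n·T) ≤ dist(ENV, 1-BP) ≤ ((Δ^{T−1} − 1)/((Δ−1)·n·T))·viol(ENV). -/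

import Mathlib

set_option maxHeartbeats 1000000

open Finset

variable {V : Type*} [Fintype V] [DecidableEq V]

/-- Hamming distance between two environments over time steps `1,…,T`. -/
def hamT (T : ℕ) (ENV ENV' : V → ℕ → Bool) : ℕ :=
  (((Finset.univ : Finset V) ×ˢ Finset.Icc 1 T).filter
    fun p => ENV p.1 p.2 ≠ ENV' p.1 p.2).card

/-- Number of violating pairs `(v,t)`, `2 ≤ t ≤ T`, of an environment for 1-BP. -/
def violT (G : SimpleGraph V) [DecidableRel G.Adj] (T : ℕ) (ENV : V → ℕ → Bool) : ℕ :=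
  (((Finset.univ : Finset V) ×ˢ Finset.Icc 2 T).filter fun p =>
    (ENV p.1 p.2 = false ∧ ∃ u ∈ G.neighborFinset p.1, ENV u (p.2 - 1) = true) ∨
    (ENV p.1 p.2 = true ∧ ∀ u ∈ G.neighborFinset p.1, ENV u (p.2 - 1) = false)).card

/-- An environment over `T` steps follows the 1-BP rule (no violating pairs). -/
def followsT (G : SimpleGraph V) [DecidableRel G.Adj] (T : ℕ) (ENV : V → ℕ → Bool) : Prop :=
  ∀ v, ∀ t, 2 ≤ t → t ≤ T →
    (ENV v t = true ↔ ∃ u ∈ G.neighborFinset v, ENV u (t - 1) = true)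

section AuxLemmas

set_option linter.unusedSectionVars false

lemma card_filter_product {a b : ℕ} (p : V → ℕ → Prop) [∀ v t, Decidable (p v t)] :
    (((Finset.univ : Finset V) ×ˢ Finset.Icc a b).filter fun q => p q.1 q.2).card
      = ∑ t ∈ Finset.Icc a b, (Finset.univ.filter fun v => p v t).card := by
  rw [Finset.card_filter, Finset.sum_product, Finset.sum_comm]
  exact Finset.sum_congr rfl fun t _ => (Finset.card_filter _ _).symm

lemma card_step (G : SimpleGraph V) [DecidableRel G.Adj] {Δ : ℕ}
    (hΔ : ∀ v, G.degree v ≤ Δ) (A B C : Finset V)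
    (h : ∀ v ∈ A, v ∈ B ∨ ∃ u ∈ C, G.Adj u v) :
    A.card ≤ B.card + Δ * C.card := by
  have hsub : A ⊆ B ∪ C.biUnion (fun u => G.neighborFinset u) := by
    intro v hv
    rcases h v hv with h1 | ⟨u, hu, hadj⟩
    · exact Finset.mem_union_left _ h1
    · exact Finset.mem_union_right _
        (Finset.mem_biUnion.2 ⟨u, hu, (G.mem_neighborFinset u v).2 hadj⟩)
  calc A.card ≤ (B ∪ C.biUnion fun u => G.neighborFinset u).card := Finset.card_le_card hsub
    _ ≤ B.card + (C.biUnion fun u => G.neighborFinset u).card := Finset.card_union_le _ _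
    _ ≤ B.card + ∑ u ∈ C, (G.neighborFinset u).card :=
        Nat.add_le_add_left Finset.card_biUnion_le _
    _ ≤ B.card + ∑ u ∈ C, Δ := by
        gcongr with u hu
        simpa [SimpleGraph.card_neighborFinset_eq_degree] using hΔ u
    _ = B.card + Δ * C.card := by rw [Finset.sum_const, smul_eq_mul, mul_comm]

lemma sum_shift_le (f : ℕ → ℕ) (T : ℕ) :
    ∑ t ∈ Finset.Icc 2 T, f (t - 1) ≤ ∑ t ∈ Finset.Icc 1 T, f t := by
  rw [← Finset.sum_image (f := f) (s := Finset.Icc 2 T) (g := fun x => x - 1)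
    (fun x hx y hy h => by simp only [Finset.coe_Icc, Set.mem_Icc, Finset.mem_coe, Finset.mem_Icc] at hx hy h; omega)]
  apply Finset.sum_le_sum_of_subset
  intro x hx
  simp only [Finset.mem_image, Finset.mem_Icc] at hx
  obtain ⟨y, hy, rfl⟩ := hx
  simp only [Finset.mem_Icc]; omega

lemma geom_coeff_le (Δ s T : ℕ) (hs : 2 ≤ s) :
    ∑ t ∈ Finset.Icc s T, Δ ^ (t - s) ≤ ∑ k ∈ Finset.range (T - 1), Δ ^ k := by
  rw [← Finset.Ico_add_one_right_eq_Icc, Finset.sum_Ico_eq_sum_range]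
  calc ∑ i ∈ Finset.range (T + 1 - s), Δ ^ (s + i - s)
      = ∑ i ∈ Finset.range (T + 1 - s), Δ ^ i := by
        apply Finset.sum_congr rfl; intro i _; congr 1; omega
    _ ≤ _ := Finset.sum_le_sum_of_subset (Finset.range_subset_range.2 (by omega))

lemma tri_swap (h : ℕ → ℕ → ℕ) (T : ℕ) :
    ∑ t ∈ Finset.Icc 2 T, ∑ s ∈ Finset.Icc 2 t, h t s
      = ∑ s ∈ Finset.Icc 2 T, ∑ t ∈ Finset.Icc s T, h t s := by
  calc ∑ t ∈ Finset.Icc 2 T, ∑ s ∈ Finset.Icc 2 t, h t s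
      = ∑ t ∈ Finset.Icc 2 T, ∑ s ∈ Finset.Icc 2 T, if s ≤ t then h t s else 0 := by
        apply Finset.sum_congr rfl; intro t ht
        rw [← Finset.sum_filter]
        congr 1; ext s; simp only [Finset.mem_Icc, Finset.mem_filter] at ht ⊢; omega
    _ = ∑ s ∈ Finset.Icc 2 T, ∑ t ∈ Finset.Icc 2 T, if s ≤ t then h t s else 0 :=
        Finset.sum_comm
    _ = ∑ s ∈ Finset.Icc 2 T, ∑ t ∈ Finset.Icc s T, h t s := by
        apply Finset.sum_congr rfl; intro s hs
        rw [← Finset.sum_filter]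
        congr 1; ext t; simp only [Finset.mem_Icc, Finset.mem_filter] at hs ⊢; omega

/-- The canonical 1-BP environment evolved from `ENV`'s configuration at time 1. -/
def bp (G : SimpleGraph V) [DecidableRel G.Adj] (ENV : V → ℕ → Bool) : ℕ → V → Bool
  | 0, v => ENV v 0
  | 1, v => ENV v 1
  | (t+2), v => decide (∃ u ∈ G.neighborFinset v, bp G ENV (t+1) u = true)

lemma bp_succ_succ (G : SimpleGraph V) [DecidableRel G.Adj] (ENV : V → ℕ → Bool)
    (t : ℕ) (v : V) :
    (bp G ENV (t+2) v = true ↔ ∃ u ∈ G.neighborFinset v, bp G ENV (t+1) u = true) := by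
  simp [bp]

lemma key_notviol (G : SimpleGraph V) [DecidableRel G.Adj]
    {ENV ENV' : V → ℕ → Bool} {v : V} {t : ℕ}
    (hiff : ENV' v t = true ↔ ∃ u ∈ G.neighborFinset v, ENV' u (t-1) = true)
    (hnv : ¬ ((ENV v t = false ∧ ∃ u ∈ G.neighborFinset v, ENV u (t - 1) = true) ∨
      (ENV v t = true ∧ ∀ u ∈ G.neighborFinset v, ENV u (t - 1) = false)))
    (hne : ENV v t ≠ ENV' v t) :
    ∃ u ∈ G.neighborFinset v, ENV u (t-1) ≠ ENV' u (t-1) := by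
  by_contra h; push_neg at h
  apply hnv
  cases hE : ENV v t with
  | false =>
    have hE' : ENV' v t = true := by
      cases hE2 : ENV' v t
      · exact absurd (hE.trans hE2.symm) hne
      · rfl
    obtain ⟨u, hu, hu1⟩ := hiff.1 hE'
    exact Or.inl ⟨rfl, ⟨u, hu, by rw [h u hu]; exact hu1⟩⟩
  | true =>
    have hE' : ENV' v t = false := by
      cases hE2 : ENV' v t
      · rfl
      · exact absurd (hE.trans hE2.symm) hne
    refine Or.inr ⟨rfl, fun u hu => ?_⟩
    cases hu1 : ENV u (t-1)
    · rfl
    · have : ENV' v t = true := hiff.2 ⟨u, hu, by rw [← h u hu]; exact hu1⟩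
      rw [hE'] at this; exact absurd this (by simp)

lemma key_viol (G : SimpleGraph V) [DecidableRel G.Adj]
    {ENV ENV' : V → ℕ → Bool} {v : V} {t : ℕ}
    (hiff : ENV' v t = true ↔ ∃ u ∈ G.neighborFinset v, ENV' u (t-1) = true)
    (hv : (ENV v t = false ∧ ∃ u ∈ G.neighborFinset v, ENV u (t - 1) = true) ∨
      (ENV v t = true ∧ ∀ u ∈ G.neighborFinset v, ENV u (t - 1) = false))
    (heq : ENV v t = ENV' v t) :
    ∃ u ∈ G.neighborFinset v, ENV u (t-1) ≠ ENV' u (t-1) := by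
  by_contra h; push_neg at h
  rcases hv with ⟨hf, u, hu, hu1⟩ | ⟨ht, hall⟩
  · have hE' : ENV' v t = true := hiff.2 ⟨u, hu, by rw [← h u hu]; exact hu1⟩
    rw [heq, hE'] at hf; exact absurd hf (by simp)
  · obtain ⟨u, hu, hu1⟩ := hiff.1 (heq ▸ ht)
    have := hall u hu
    rw [h u hu, hu1] at this; exact absurd this (by simp)

lemma bp_follows (G : SimpleGraph V) [DecidableRel G.Adj] (T : ℕ) (ENV : V → ℕ → Bool) :
    followsT G T (fun v t => bp G ENV t v) := by
  intro v t h2 _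
  obtain ⟨s, rfl⟩ : ∃ s, t = s + 2 := ⟨t - 2, by omega⟩
  simpa using bp_succ_succ G ENV s v

lemma lower_nat (G : SimpleGraph V) [DecidableRel G.Adj] {Δ T : ℕ}
    (hΔ : ∀ v, G.degree v ≤ Δ) (hT : 2 ≤ T)
    (ENV ENV' : V → ℕ → Bool) (hf : followsT G T ENV') :
    violT G T ENV ≤ (Δ + 1) * hamT T ENV ENV' := by
  have hviol : violT G T ENV = ∑ t ∈ Finset.Icc 2 T,
      (Finset.univ.filter fun v =>
        (ENV v t = false ∧ ∃ u ∈ G.neighborFinset v, ENV u (t - 1) = true) ∨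
        (ENV v t = true ∧ ∀ u ∈ G.neighborFinset v, ENV u (t - 1) = false)).card := by
    unfold violT
    rw [Finset.card_filter, Finset.sum_product, Finset.sum_comm]
    apply Finset.sum_congr rfl; intro t _
    rw [Finset.card_filter]
  have hham : hamT T ENV ENV' = ∑ t ∈ Finset.Icc 1 T,
      (Finset.univ.filter fun v => ENV v t ≠ ENV' v t).card := by
    unfold hamT
    rw [Finset.card_filter, Finset.sum_product, Finset.sum_comm]
    exact Finset.sum_congr rfl fun t _ => (Finset.card_filter _ _).symm
  have step : ∀ t ∈ Finset.Icc 2 T,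
      (Finset.univ.filter fun v =>
        (ENV v t = false ∧ ∃ u ∈ G.neighborFinset v, ENV u (t - 1) = true) ∨
        (ENV v t = true ∧ ∀ u ∈ G.neighborFinset v, ENV u (t - 1) = false)).card
      ≤ (Finset.univ.filter fun v => ENV v t ≠ ENV' v t).card
        + Δ * (Finset.univ.filter fun v => ENV v (t-1) ≠ ENV' v (t-1)).card := by
    intro t ht
    simp only [Finset.mem_Icc] at ht
    apply card_step G hΔ
    intro v hv
    simp only [Finset.mem_filter, Finset.mem_univ, true_and] at hv ⊢
    by_cases hd : ENV v t ≠ ENV' v t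
    · exact Or.inl hd
    · push_neg at hd
      obtain ⟨u, hu, hne⟩ := key_viol G (hf v t ht.1 ht.2) hv hd
      exact Or.inr ⟨u, hne, ((G.mem_neighborFinset v u).1 hu).symm⟩
  calc violT G T ENV ≤ ∑ t ∈ Finset.Icc 2 T,
        ((Finset.univ.filter fun v => ENV v t ≠ ENV' v t).card
          + Δ * (Finset.univ.filter fun v => ENV v (t-1) ≠ ENV' v (t-1)).card) := by
        rw [hviol]; exact Finset.sum_le_sum step
    _ = (∑ t ∈ Finset.Icc 2 T, (Finset.univ.filter fun v => ENV v t ≠ ENV' v t).card)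
        + Δ * ∑ t ∈ Finset.Icc 2 T,
            (Finset.univ.filter fun v => ENV v (t-1) ≠ ENV' v (t-1)).card := by
        rw [Finset.sum_add_distrib, Finset.mul_sum]
    _ ≤ hamT T ENV ENV' + Δ * hamT T ENV ENV' := by
        gcongr
        · rw [hham]
          exact Finset.sum_le_sum_of_subset (Finset.Icc_subset_Icc_left (by omega))
        · rw [hham]
          exact sum_shift_le (fun t => (Finset.univ.filter fun v => ENV v t ≠ ENV' v t).card) T
    _ = (Δ + 1) * hamT T ENV ENV' := by ring

lemma upper_nat (G : SimpleGraph V) [DecidableRel G.Adj] {Δ T : ℕ}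
    (hΔ : ∀ v, G.degree v ≤ Δ) (hT : 2 ≤ T) (ENV : V → ℕ → Bool) :
    hamT T ENV (fun v t => bp G ENV t v)
      ≤ (∑ k ∈ Finset.range (T - 1), Δ ^ k) * violT G T ENV := by
  set ENV' : V → ℕ → Bool := fun v t => bp G ENV t v with hENV'
  have hviol : violT G T ENV = ∑ t ∈ Finset.Icc 2 T,
      (Finset.univ.filter fun v =>
        (ENV v t = false ∧ ∃ u ∈ G.neighborFinset v, ENV u (t - 1) = true) ∨
        (ENV v t = true ∧ ∀ u ∈ G.neighborFinset v, ENV u (t - 1) = false)).card := by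
    unfold violT
    rw [Finset.card_filter, Finset.sum_product, Finset.sum_comm]
    apply Finset.sum_congr rfl; intro t _
    rw [Finset.card_filter]
  have hham : hamT T ENV ENV' = ∑ t ∈ Finset.Icc 1 T,
      (Finset.univ.filter fun v => ENV v t ≠ ENV' v t).card := by
    unfold hamT
    rw [Finset.card_filter, Finset.sum_product, Finset.sum_comm]
    exact Finset.sum_congr rfl fun t _ => (Finset.card_filter _ _).symm
  have hD1 : (Finset.univ.filter fun v => ENV v 1 ≠ ENV' v 1).card = 0 := by
    rw [Finset.card_eq_zero, Finset.filter_eq_empty_iff]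
    intro v _
    simp [hENV', bp]
  have ind : ∀ t : ℕ, (Finset.univ.filter fun v => ENV v (t+1) ≠ ENV' v (t+1)).card
      ≤ ∑ s ∈ Finset.Icc 2 (t+1), Δ ^ (t+1-s) *
        (Finset.univ.filter fun v =>
          (ENV v s = false ∧ ∃ u ∈ G.neighborFinset v, ENV u (s - 1) = true) ∨
          (ENV v s = true ∧ ∀ u ∈ G.neighborFinset v, ENV u (s - 1) = false)).card := by
    intro t
    induction t with
    | zero => simp [hD1]
    | succ m ih =>
      have hiff : ∀ v : V, (ENV' v (m+2) = true ↔
          ∃ u ∈ G.neighborFinset v, ENV' u ((m+2)-1) = true) := by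
        intro v; simpa [hENV'] using bp_succ_succ G ENV m v
      have h1 : (Finset.univ.filter fun v => ENV v (m+2) ≠ ENV' v (m+2)).card
          ≤ (Finset.univ.filter fun v =>
              (ENV v (m+2) = false ∧ ∃ u ∈ G.neighborFinset v, ENV u ((m+2) - 1) = true) ∨
              (ENV v (m+2) = true ∧ ∀ u ∈ G.neighborFinset v, ENV u ((m+2) - 1) = false)).card
            + Δ * (Finset.univ.filter fun v => ENV v (m+1) ≠ ENV' v (m+1)).card := by
        apply card_step G hΔ
        intro v hv
        simp only [Finset.mem_filter, Finset.mem_univ, true_and] at hv ⊢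
        by_cases hviol' : (ENV v (m+2) = false ∧
            ∃ u ∈ G.neighborFinset v, ENV u ((m+2) - 1) = true) ∨
            (ENV v (m+2) = true ∧ ∀ u ∈ G.neighborFinset v, ENV u ((m+2) - 1) = false)
        · exact Or.inl hviol'
        · obtain ⟨u, hu, hne⟩ := key_notviol G (hiff v) hviol' hv
          refine Or.inr ⟨u, ?_, ((G.mem_neighborFinset v u).1 hu).symm⟩
          simpa using hne
      have hins : Finset.Icc 2 (m+2) = insert (m+2) (Finset.Icc 2 (m+1)) := by
        ext x; simp only [Finset.mem_Icc, Finset.mem_insert]; omega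
      calc (Finset.univ.filter fun v => ENV v (m+2) ≠ ENV' v (m+2)).card
          ≤ (Finset.univ.filter fun v =>
              (ENV v (m+2) = false ∧ ∃ u ∈ G.neighborFinset v, ENV u ((m+2) - 1) = true) ∨
              (ENV v (m+2) = true ∧ ∀ u ∈ G.neighborFinset v, ENV u ((m+2) - 1) = false)).card
            + Δ * (Finset.univ.filter fun v => ENV v (m+1) ≠ ENV' v (m+1)).card := h1
        _ ≤ (Finset.univ.filter fun v =>
              (ENV v (m+2) = false ∧ ∃ u ∈ G.neighborFinset v, ENV u ((m+2) - 1) = true) ∨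
              (ENV v (m+2) = true ∧ ∀ u ∈ G.neighborFinset v, ENV u ((m+2) - 1) = false)).card
            + Δ * ∑ s ∈ Finset.Icc 2 (m+1), Δ ^ (m+1-s) *
              (Finset.univ.filter fun v =>
                (ENV v s = false ∧ ∃ u ∈ G.neighborFinset v, ENV u (s - 1) = true) ∨
                (ENV v s = true ∧ ∀ u ∈ G.neighborFinset v, ENV u (s - 1) = false)).card := by
            gcongr
        _ = ∑ s ∈ Finset.Icc 2 (m+2), Δ ^ (m+2-s) *
              (Finset.univ.filter fun v =>
                (ENV v s = false ∧ ∃ u ∈ G.neighborFinset v, ENV u (s - 1) = true) ∨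
                (ENV v s = true ∧ ∀ u ∈ G.neighborFinset v, ENV u (s - 1) = false)).card := by
            rw [hins, Finset.sum_insert (by simp), Finset.mul_sum]
            have h0 : m + 2 - (m + 2) = 0 := by omega
            rw [h0, pow_zero, one_mul]
            congr 1
            apply Finset.sum_congr rfl
            intro s hs
            simp only [Finset.mem_Icc] at hs
            rw [show m + 2 - s = (m + 1 - s) + 1 from by omega, pow_succ', mul_assoc]
  have hIcc : Finset.Icc 1 T = insert 1 (Finset.Icc 2 T) := by
    ext x; simp only [Finset.mem_Icc, Finset.mem_insert]; omega
  calc hamT T ENV ENV'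
      = ∑ t ∈ Finset.Icc 2 T, (Finset.univ.filter fun v => ENV v t ≠ ENV' v t).card := by
        rw [hham, hIcc, Finset.sum_insert (by simp), hD1, zero_add]
    _ ≤ ∑ t ∈ Finset.Icc 2 T, ∑ s ∈ Finset.Icc 2 t, Δ ^ (t-s) *
          (Finset.univ.filter fun v =>
            (ENV v s = false ∧ ∃ u ∈ G.neighborFinset v, ENV u (s - 1) = true) ∨
            (ENV v s = true ∧ ∀ u ∈ G.neighborFinset v, ENV u (s - 1) = false)).card := by
        apply Finset.sum_le_sum
        intro t ht
        simp only [Finset.mem_Icc] at ht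
        have := ind (t - 1)
        rwa [show t - 1 + 1 = t from by omega] at this
    _ = ∑ s ∈ Finset.Icc 2 T, ∑ t ∈ Finset.Icc s T, Δ ^ (t-s) *
          (Finset.univ.filter fun v =>
            (ENV v s = false ∧ ∃ u ∈ G.neighborFinset v, ENV u (s - 1) = true) ∨
            (ENV v s = true ∧ ∀ u ∈ G.neighborFinset v, ENV u (s - 1) = false)).card :=
        tri_swap _ T
    _ = ∑ s ∈ Finset.Icc 2 T, (∑ t ∈ Finset.Icc s T, Δ ^ (t-s)) *
          (Finset.univ.filter fun v =>
            (ENV v s = false ∧ ∃ u ∈ G.neighborFinset v, ENV u (s - 1) = true) ∨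
            (ENV v s = true ∧ ∀ u ∈ G.neighborFinset v, ENV u (s - 1) = false)).card := by
        apply Finset.sum_congr rfl; intro s _; rw [Finset.sum_mul]
    _ ≤ ∑ s ∈ Finset.Icc 2 T, (∑ k ∈ Finset.range (T - 1), Δ ^ k) *
          (Finset.univ.filter fun v =>
            (ENV v s = false ∧ ∃ u ∈ G.neighborFinset v, ENV u (s - 1) = true) ∨
            (ENV v s = true ∧ ∀ u ∈ G.neighborFinset v, ENV u (s - 1) = false)).card := by
        apply Finset.sum_le_sum
        intro s hs
        simp only [Finset.mem_Icc] at hs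
        exact Nat.mul_le_mul_right _ (geom_coeff_le Δ s T hs.1)
    _ = (∑ k ∈ Finset.range (T - 1), Δ ^ k) * violT G T ENV := by
        rw [hviol, Finset.mul_sum]

end AuxLemmas

theorem stmt5 (G : SimpleGraph V) [DecidableRel G.Adj] (n Δ T : ℕ)
    (hn : n = Fintype.card V) (hΔ2 : 2 ≤ Δ) (hΔ : ∀ v, G.degree v ≤ Δ)
    (hiso : ∀ v, 0 < G.degree v) (hT : 2 ≤ T) (ENV : V → ℕ → Bool) :
    (∀ ENV' : V → ℕ → Bool, followsT G T ENV' →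
      (violT G T ENV : ℝ) / ((Δ + 1) * n * T) ≤ (hamT T ENV ENV' : ℝ) / (n * T)) ∧
    (∃ ENV' : V → ℕ → Bool, followsT G T ENV' ∧
      (hamT T ENV ENV' : ℝ) / (n * T) ≤
        ((Δ : ℝ) ^ (T - 1) - 1) / ((Δ - 1) * n * T) * violT G T ENV) := by
  constructor
  · intro ENV' hf
    rcases Nat.eq_zero_or_pos n with hn0 | hnpos
    · simp [hn0]
    · have hnat := lower_nat G hΔ hT ENV ENV' hf
      have hnR : (0:ℝ) < n := by exact_mod_cast hnpos
      have hTR : (0:ℝ) < T := by positivity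
      rw [div_le_div_iff₀ (by positivity) (by positivity)]
      have hcast : (violT G T ENV : ℝ) ≤ ((Δ:ℝ) + 1) * hamT T ENV ENV' := by
        exact_mod_cast hnat
      nlinarith [mul_le_mul_of_nonneg_right hcast (le_of_lt (mul_pos hnR hTR)),
        (hamT T ENV ENV' : ℝ) ≥ 0]
  · refine ⟨fun v t => bp G ENV t v, bp_follows G T ENV, ?_⟩
    have hnat := upper_nat G hΔ hT ENV
    have hΔ1 : (Δ:ℝ) ≠ 1 := by
      have : (2:ℝ) ≤ (Δ:ℝ) := by exact_mod_cast hΔ2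
      linarith
    have hS : ((∑ k ∈ Finset.range (T - 1), Δ ^ k : ℕ) : ℝ)
        = ((Δ : ℝ) ^ (T - 1) - 1) / ((Δ:ℝ) - 1) := by
      push_cast
      exact geom_sum_eq hΔ1 (T - 1)
    rcases Nat.eq_zero_or_pos n with hn0 | hnpos
    · simp [hn0]
    · have hnR : (0:ℝ) < n := by exact_mod_cast hnpos
      have hTR : (0:ℝ) < T := by positivity
      have hΔR : (0:ℝ) < (Δ:ℝ) - 1 := by
        have : (2:ℝ) ≤ (Δ:ℝ) := by exact_mod_cast hΔ2
        linarith
      have key : ((Δ : ℝ) ^ (T - 1) - 1) / (((Δ:ℝ) - 1) * n * T) * violT G T ENV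
          = ((∑ k ∈ Finset.range (T - 1), Δ ^ k : ℕ) : ℝ) * violT G T ENV / (n * T) := by
        rw [show ((Δ:ℝ) - 1) * n * T = ((Δ:ℝ) - 1) * ((n:ℝ) * T) from by ring,
          ← div_div, ← hS]
        ring
      rw [key, div_le_div_iff₀ (by positivity) (by positivity)]
      have hcast : (hamT T ENV fun v t => bp G ENV t v : ℝ)
          ≤ ((∑ k ∈ Finset.range (T - 1), Δ ^ k : ℕ) : ℝ) * violT G T ENV := by
        exact_mod_cast hnat
      nlinarith [mul_le_mul_of_nonneg_right hcast (le_of_lt (mul_pos hnR hTR))]
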